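/- (Theorem 3, convergence of block-wise TR1 Jacobian approximations on the null space.) Let F : ℝⁿ → ℝᵐ be continuously differentiable with Jacobian DF Lipschitz continuous with constant c₃, and let c₁ ∈ (0,1). Let (wᵏ)ₖ in ℝⁿ, (σᵏ)ₖ in ℝᵐ, (Aᵏ)ₖ in ℝ^{m×n} satisfy the dynamic TR1 update setup: sᵏ = wᵏ⁺¹ − wᵏ, yᵏ = F(wᵏ⁺¹) − F(wᵏ), γᵏ = DF(wᵏ⁺¹)ᵀσᵏ, ρᵏ = yᵏ − Aᵏsᵏ, τᵏ = γᵏ − (Aᵏ)ᵀσᵏ, and at every iteration k: σᵏ ≠ 0, both skipping conditions |(τᵏ)ᵀsᵏ| ≥ c₁‖σᵏ‖‖ρᵏ‖ and |(σᵏ)ᵀρᵏ| ≥ c₁‖sᵏ‖‖τᵏ‖ hold, and Aᵏ⁺¹ = Aᵏ + αᵏ ρᵏ (τᵏ)ᵀ with αᵏ equal to either the forward scaling 1/((τᵏ)ᵀsᵏ) or the adjoint scaling 1/((σᵏ)ᵀρᵏ) (denominator nonzero). Assume wᵏ → w* as k → ∞. Let N ∈ ℝ^{n×q} have orthonormal columns,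 and assume uniform linear independence of the steps in the range of N: there exist c₄ > 0, an integer l ≥ q, and k₀ such that for each k ≥ k₀ there exist q distinct indices k ≤ k¹ < … < k^q ≤ k + l and nonzero vectors v¹, …, v^q ∈ ℝ^q with s^{kʲ} = N vʲ for each j, such that the matrix with columns vʲ/‖vʲ‖, j = 1,…,q, has minimum singular value at least c₄. Then lim_{k→∞} ‖(Aᵏ − DF(w*)) N‖ = 0. -/

import Mathlib

open scoped RealInnerProductSpace Matrix Matrix.Norms.L2Operator
open Filter

/-- Multiplication of a matrix with a vector, as a map between Euclidean spaces. -/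
noncomputable def matVec {m n : ℕ} (A : Matrix (Fin m) (Fin n) ℝ)
    (v : EuclideanSpace ℝ (Fin n)) : EuclideanSpace ℝ (Fin m) :=
  Matrix.toEuclideanLin A v

/-- Outer product `u vᵀ` of two Euclidean vectors, as a matrix. -/
def outer {m n : ℕ} (u : EuclideanSpace ℝ (Fin m)) (v : EuclideanSpace ℝ (Fin n)) :
    Matrix (Fin m) (Fin n) ℝ :=
  Matrix.of fun i j => u i * v j

namespace TR1Aux

variable {m n p q : ℕ}

lemma matVec_apply (A : Matrix (Fin m) (Fin n) ℝ) (x : EuclideanSpace ℝ (Fin n)) (i : Fin m) :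
    matVec A x i = ∑ j, A i j * x j := by
  simp [matVec, Matrix.toEuclideanLin_apply, Matrix.mulVec, dotProduct]

lemma matVec_add_left (A B : Matrix (Fin m) (Fin n) ℝ) (x : EuclideanSpace ℝ (Fin n)) :
    matVec (A + B) x = matVec A x + matVec B x := by
  simp [matVec, map_add]

lemma matVec_sub_left (A B : Matrix (Fin m) (Fin n) ℝ) (x : EuclideanSpace ℝ (Fin n)) :
    matVec (A - B) x = matVec A x - matVec B x := by
  simp [matVec, map_sub]

lemma matVec_smul_left (c : ℝ) (A : Matrix (Fin m) (Fin n) ℝ) (x : EuclideanSpace ℝ (Fin n)) :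
    matVec (c • A) x = c • matVec A x := by
  simp [matVec, map_smul]

lemma matVec_smul_right (A : Matrix (Fin m) (Fin n) ℝ) (c : ℝ) (x : EuclideanSpace ℝ (Fin n)) :
    matVec A (c • x) = c • matVec A x :=
  map_smul (Matrix.toEuclideanLin A) c x

lemma norm_matVec_le (A : Matrix (Fin m) (Fin n) ℝ) (x : EuclideanSpace ℝ (Fin n)) :
    ‖matVec A x‖ ≤ ‖A‖ * ‖x‖ := by
  rw [Matrix.l2_opNorm_def]
  exact ((Matrix.toEuclideanLin.trans LinearMap.toContinuousLinearMap) A).le_opNorm x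

lemma opNorm_le_of_forall (A : Matrix (Fin m) (Fin n) ℝ) {C : ℝ} (hC : 0 ≤ C)
    (h : ∀ x : EuclideanSpace ℝ (Fin n), ‖matVec A x‖ ≤ C * ‖x‖) : ‖A‖ ≤ C := by
  rw [Matrix.l2_opNorm_def]
  exact ContinuousLinearMap.opNorm_le_bound _ hC h

lemma inner_matVec_transpose (A : Matrix (Fin m) (Fin n) ℝ) (u : EuclideanSpace ℝ (Fin m))
    (x : EuclideanSpace ℝ (Fin n)) : ⟪matVec Aᵀ u, x⟫ = ⟪u, matVec A x⟫ := by
  simp only [PiLp.inner_apply, matVec_apply, RCLike.inner_apply, starRingEnd_apply, star_trivial,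
    Matrix.transpose_apply, Finset.sum_mul, Finset.mul_sum]
  rw [Finset.sum_comm]
  congr 1; ext j; congr 1; ext i; ring

lemma matVec_outer (u : EuclideanSpace ℝ (Fin m)) (v : EuclideanSpace ℝ (Fin n))
    (x : EuclideanSpace ℝ (Fin n)) : matVec (outer u v) x = ⟪v, x⟫ • u := by
  ext i
  simp [matVec_apply, outer, PiLp.inner_apply, Finset.sum_mul, Finset.mul_sum, mul_comm,
    mul_left_comm, mul_assoc]

lemma matVec_mul (A : Matrix (Fin m) (Fin n) ℝ) (B : Matrix (Fin n) (Fin p) ℝ)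
    (x : EuclideanSpace ℝ (Fin p)) : matVec (A * B) x = matVec A (matVec B x) := by
  ext i
  simp only [matVec_apply, Matrix.mul_apply, Finset.sum_mul, Finset.mul_sum]
  rw [Finset.sum_comm]
  congr 1; ext a; congr 1; ext b; ring

lemma matVec_one (z : EuclideanSpace ℝ (Fin q)) : matVec (1 : Matrix (Fin q) (Fin q) ℝ) z = z := by
  ext i; simp [matVec_apply, Matrix.one_apply]

lemma opNorm_transpose (A : Matrix (Fin m) (Fin n) ℝ) : ‖Aᵀ‖ = ‖A‖ := by
  have : Aᵀ = Aᴴ := by ext i j; simp [Matrix.conjTranspose_apply]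
  rw [this, Matrix.l2_opNorm_conjTranspose]

lemma norm_matVec_orthonormal {N : Matrix (Fin n) (Fin q) ℝ} (hN : Nᵀ * N = 1)
    (z : EuclideanSpace ℝ (Fin q)) : ‖matVec N z‖ = ‖z‖ := by
  have h : ⟪matVec N z, matVec N z⟫ = ⟪z, z⟫ := by
    rw [← inner_matVec_transpose, ← matVec_mul, hN, matVec_one]
  have h1 := real_inner_self_eq_norm_mul_norm (matVec N z)
  have h2 := real_inner_self_eq_norm_mul_norm z
  nlinarith [norm_nonneg (matVec N z), norm_nonneg z]

lemma coord_le_norm (z : EuclideanSpace ℝ (Fin q)) (i : Fin q) : ‖z i‖ ≤ ‖z‖ := by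
  rw [EuclideanSpace.norm_eq]
  have h1 : ‖z i‖ ^ 2 ≤ ∑ j, ‖z j‖ ^ 2 :=
    Finset.single_le_sum (f := fun j => ‖z j‖ ^ 2) (fun j _ => sq_nonneg _) (Finset.mem_univ i)
  calc ‖z i‖ = Real.sqrt (‖z i‖ ^ 2) := (Real.sqrt_sq (norm_nonneg _)).symm
    _ ≤ _ := Real.sqrt_le_sqrt h1

lemma matrix_norm_eq (M : Matrix (Fin m) (Fin n) ℝ) :
    ‖M‖ = ‖LinearMap.toContinuousLinearMap (Matrix.toEuclideanLin M)‖ :=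
  Matrix.l2_opNorm_def M

lemma euc_sum_apply {ι : Type*} [DecidableEq ι] (t : Finset ι) (c : ι → ℝ)
    (v : ι → EuclideanSpace ℝ (Fin q)) (r : Fin q) :
    (∑ i ∈ t, c i • v i) r = ∑ i ∈ t, c i * v i r := by
  induction t using Finset.induction with
  | empty => simp
  | insert _ _ h ih =>
    rename_i a t
    rw [Finset.sum_insert h, Finset.sum_insert h, ← ih]
    rfl

lemma matVec_sum {ι : Type*} (t : Finset ι) (A : Matrix (Fin m) (Fin n) ℝ)
    (f : ι → EuclideanSpace ℝ (Fin n)) :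
    matVec A (∑ i ∈ t, f i) = ∑ i ∈ t, matVec A (f i) :=
  map_sum (Matrix.toEuclideanLin A) f t

lemma secant_bound {c₃ : ℝ} {F : EuclideanSpace ℝ (Fin n) → EuclideanSpace ℝ (Fin m)}
    {J : EuclideanSpace ℝ (Fin n) → Matrix (Fin m) (Fin n) ℝ}
    (hJ : ∀ w, HasFDerivAt F (LinearMap.toContinuousLinearMap (Matrix.toEuclideanLin (J w))) w)
    (hLip : ∀ w₁ w₂, ‖J w₁ - J w₂‖ ≤ c₃ * ‖w₁ - w₂‖)
    (hc₃ : 0 ≤ c₃) (wstar a b : EuclideanSpace ℝ (Fin n)) :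
    ‖F b - F a - matVec (J wstar) (b - a)‖ ≤ c₃ * max ‖a - wstar‖ ‖b - wstar‖ * ‖b - a‖ := by
  set r := max ‖a - wstar‖ ‖b - wstar‖ with hr
  have ha : a ∈ Metric.closedBall wstar r := by
    simp [Metric.mem_closedBall, dist_eq_norm, hr, le_max_left]
  have hb : b ∈ Metric.closedBall wstar r := by
    simp [Metric.mem_closedBall, dist_eq_norm, hr, le_max_right]
  have key := Convex.norm_image_sub_le_of_norm_hasFDerivWithin_le'
    (f := F) (f' := fun x => LinearMap.toContinuousLinearMap (Matrix.toEuclideanLin (J x)))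
    (φ := LinearMap.toContinuousLinearMap (Matrix.toEuclideanLin (J wstar)))
    (s := Metric.closedBall wstar r) (C := c₃ * r) (x := a) (y := b)
    (fun x _ => (hJ x).hasFDerivWithinAt)
    (fun x hx => by
      have h2 : LinearMap.toContinuousLinearMap (Matrix.toEuclideanLin (J x)) -
          LinearMap.toContinuousLinearMap (Matrix.toEuclideanLin (J wstar)) =
          LinearMap.toContinuousLinearMap (Matrix.toEuclideanLin (J x - J wstar)) := by
        rw [map_sub, map_sub]
      rw [h2, ← matrix_norm_eq]
      calc ‖J x - J wstar‖ ≤ c₃ * ‖x - wstar‖ := hLip x wstar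
        _ ≤ c₃ * r := by
            have hxr : ‖x - wstar‖ ≤ r := by
              rw [← dist_eq_norm]; exact Metric.mem_closedBall.mp hx
            exact mul_le_mul_of_nonneg_left hxr hc₃)
    (convex_closedBall wstar r) ha hb
  have h3 : matVec (J wstar) (b - a) =
      LinearMap.toContinuousLinearMap (Matrix.toEuclideanLin (J wstar)) (b - a) := rfl
  rw [h3]
  exact key

end TR1Aux

open TR1Aux

set_option maxHeartbeats 4000000 in
/-- Theorem 3: convergence of the dynamic TR1 Jacobian approximations to
the exact Jacobian on the range of `N` (the null space of the active constraints),
under the uniform linear independence assumption.  In the uniform linear independence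
hypothesis, "the matrix with columns `vʲ/‖vʲ‖` has minimum singular value at least `c₄`"
is expressed as `c₄‖x‖ ≤ ‖V x‖` for all `x`. -/
theorem tr1_jacobian_convergence_on_nullspace {n m q : ℕ}
    (c₁ c₃ : ℝ) (hc₁0 : 0 < c₁) (hc₁1 : c₁ < 1)
    (F : EuclideanSpace ℝ (Fin n) → EuclideanSpace ℝ (Fin m))
    (J : EuclideanSpace ℝ (Fin n) → Matrix (Fin m) (Fin n) ℝ)
    (hJ : ∀ w, HasFDerivAt F (LinearMap.toContinuousLinearMap (Matrix.toEuclideanLin (J w))) w)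
    (hLip : ∀ w₁ w₂, ‖J w₁ - J w₂‖ ≤ c₃ * ‖w₁ - w₂‖)
    (w : ℕ → EuclideanSpace ℝ (Fin n)) (σ : ℕ → EuclideanSpace ℝ (Fin m))
    (A : ℕ → Matrix (Fin m) (Fin n) ℝ)
    (s : ℕ → EuclideanSpace ℝ (Fin n)) (hs : ∀ k, s k = w (k + 1) - w k)
    (y : ℕ → EuclideanSpace ℝ (Fin m)) (hy : ∀ k, y k = F (w (k + 1)) - F (w k))
    (γ : ℕ → EuclideanSpace ℝ (Fin n)) (hγ : ∀ k, γ k = matVec (J (w (k + 1)))ᵀ (σ k))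
    (ρ : ℕ → EuclideanSpace ℝ (Fin m)) (hρ : ∀ k, ρ k = y k - matVec (A k) (s k))
    (τ : ℕ → EuclideanSpace ℝ (Fin n)) (hτ : ∀ k, τ k = γ k - matVec (A k)ᵀ (σ k))
    (hσ : ∀ k, σ k ≠ 0)
    (hskip1 : ∀ k, c₁ * ‖σ k‖ * ‖ρ k‖ ≤ |⟪τ k, s k⟫|)
    (hskip2 : ∀ k, c₁ * ‖s k‖ * ‖τ k‖ ≤ |⟪σ k, ρ k⟫|)
    (hupd : ∀ k,
      (⟪τ k, s k⟫ ≠ 0 ∧ A (k + 1) = A k + (1 / ⟪τ k, s k⟫) • outer (ρ k) (τ k)) ∨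
      (⟪σ k, ρ k⟫ ≠ 0 ∧ A (k + 1) = A k + (1 / ⟪σ k, ρ k⟫) • outer (ρ k) (τ k)))
    (wstar : EuclideanSpace ℝ (Fin n)) (hconv : Tendsto w atTop (nhds wstar))
    (N : Matrix (Fin n) (Fin q) ℝ) (hN : Nᵀ * N = 1)
    (c₄ : ℝ) (hc₄ : 0 < c₄) (l k₀ : ℕ) (hl : q ≤ l)
    (hULI : ∀ k, k₀ ≤ k → ∃ ks : Fin q → ℕ, StrictMono ks ∧
      (∀ j, k ≤ ks j ∧ ks j ≤ k + l) ∧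
      ∃ v : Fin q → EuclideanSpace ℝ (Fin q), (∀ j, v j ≠ 0) ∧
        (∀ j, s (ks j) = matVec N (v j)) ∧
        (∀ x : EuclideanSpace ℝ (Fin q),
          c₄ * ‖x‖ ≤ ‖matVec (Matrix.of fun i j => v j i / ‖v j‖) x‖)) :
    Tendsto (fun k => ‖(A k - J wstar) * N‖) atTop (nhds 0) := by
  classical
  -- a nonnegative Lipschitz constant
  set cL : ℝ := max c₃ 0 with hcLdef
  have hcL0 : (0:ℝ) ≤ cL := le_max_right _ _
  have hLip' : ∀ w₁ w₂, ‖J w₁ - J w₂‖ ≤ cL * ‖w₁ - w₂‖ := fun w₁ w₂ =>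
    (hLip w₁ w₂).trans (mul_le_mul_of_nonneg_right (le_max_left _ _) (norm_nonneg _))
  set ε : ℕ → ℝ := fun k => ‖w k - wstar‖ with hεdef
  have hε0 : ∀ k, 0 ≤ ε k := fun k => norm_nonneg _
  set η : ℕ → ℝ := fun k => max (ε k) (ε (k + 1)) with hηdef
  have hη0 : ∀ k, 0 ≤ η k := fun k => le_trans (hε0 k) (le_max_left _ _)
  set E : ℕ → Matrix (Fin m) (Fin n) ℝ := fun k => A k - J wstar with hEdef
  set dv : ℕ → EuclideanSpace ℝ (Fin m) := fun k => y k - matVec (J wstar) (s k) with hdvdef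
  set ev : ℕ → EuclideanSpace ℝ (Fin n) := fun k => γ k - matVec (J wstar)ᵀ (σ k) with hevdef
  have hσpos : ∀ k, 0 < ‖σ k‖ := fun k => norm_pos_iff.mpr (hσ k)
  -- secant error bounds
  have hdv : ∀ k, ‖dv k‖ ≤ cL * η k * ‖s k‖ := by
    intro k
    have h := secant_bound hJ hLip' hcL0 wstar (w k) (w (k + 1))
    simpa [hdvdef, hy, hs, hηdef, hεdef] using h
  have hev : ∀ k, ‖ev k‖ ≤ cL * η k * ‖σ k‖ := by
    intro k
    have h1 : ev k = matVec ((J (w (k + 1)) - J wstar)ᵀ) (σ k) := by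
      rw [hevdef]
      simp only
      rw [hγ k, Matrix.transpose_sub, matVec_sub_left]
    rw [h1]
    calc ‖matVec ((J (w (k + 1)) - J wstar)ᵀ) (σ k)‖
        ≤ ‖(J (w (k + 1)) - J wstar)ᵀ‖ * ‖σ k‖ := norm_matVec_le _ _
      _ = ‖J (w (k + 1)) - J wstar‖ * ‖σ k‖ := by rw [opNorm_transpose]
      _ ≤ (cL * ‖w (k + 1) - wstar‖) * ‖σ k‖ :=
          mul_le_mul_of_nonneg_right (hLip' _ _) (norm_nonneg _)
      _ ≤ cL * η k * ‖σ k‖ := by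
          have hle : ‖w (k + 1) - wstar‖ ≤ η k := by
            rw [hηdef]; exact le_max_right _ _
          have := mul_le_mul_of_nonneg_left hle hcL0
          exact mul_le_mul_of_nonneg_right this (norm_nonneg _)
  -- error decompositions
  have hρE : ∀ k, ρ k = dv k - matVec (E k) (s k) := by
    intro k
    rw [hρ k, hdvdef, hEdef]
    simp only
    rw [matVec_sub_left]
    abel
  have hτinner : ∀ k u, ⟪τ k, u⟫ = ⟪ev k, u⟫ - ⟪σ k, matVec (E k) u⟫ := by
    intro k u
    rw [hτ k, hevdef, hEdef]
    simp only
    rw [← inner_matVec_transpose (A k - J wstar), Matrix.transpose_sub, matVec_sub_left]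
    simp only [inner_sub_left]
    ring
  have habsτ : ∀ k (u : EuclideanSpace ℝ (Fin n)),
      |⟪τ k, u⟫| ≤ ‖σ k‖ * (‖matVec (E k) u‖ + cL * η k * ‖u‖) := by
    intro k u
    rw [hτinner k u]
    calc |⟪ev k, u⟫ - ⟪σ k, matVec (E k) u⟫|
        ≤ |⟪ev k, u⟫| + |⟪σ k, matVec (E k) u⟫| := abs_sub _ _
      _ ≤ ‖ev k‖ * ‖u‖ + ‖σ k‖ * ‖matVec (E k) u‖ :=
          add_le_add (abs_real_inner_le_norm _ _) (abs_real_inner_le_norm _ _)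
      _ ≤ (cL * η k * ‖σ k‖) * ‖u‖ + ‖σ k‖ * ‖matVec (E k) u‖ :=
          add_le_add (mul_le_mul_of_nonneg_right (hev k) (norm_nonneg _)) le_rfl
      _ = ‖σ k‖ * (‖matVec (E k) u‖ + cL * η k * ‖u‖) := by ring
  -- update difference formula
  have hdiff : ∀ k (α : ℝ) (u : EuclideanSpace ℝ (Fin n)),
      A (k + 1) = A k + α • outer (ρ k) (τ k) →
      matVec (E (k + 1)) u = matVec (E k) u + (α * ⟪τ k, u⟫) • ρ k := by
    intro k α u hA
    have hE1 : E (k + 1) = E k + α • outer (ρ k) (τ k) := by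
      rw [hEdef]
      simp only
      rw [hA, add_sub_right_comm]
    rw [hE1, matVec_add_left, matVec_smul_left, matVec_outer, smul_smul]
  -- per-step deterioration
  have hstep : ∀ k (u : EuclideanSpace ℝ (Fin n)),
      ‖matVec (E (k + 1)) u‖ ≤ (1 + 1 / c₁ ^ 2) * ‖matVec (E k) u‖
        + (1 / c₁ ^ 2) * cL * η k * ‖u‖ := by
    intro k u
    have hc2 : (0:ℝ) < c₁ ^ 2 := by positivity
    have hB0 : 0 ≤ ‖matVec (E k) u‖ + cL * η k * ‖u‖ :=
      add_nonneg (norm_nonneg _)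
        (mul_nonneg (mul_nonneg hcL0 (hη0 k)) (norm_nonneg _))
    have habs := habsτ k u
    have hP : ‖matVec (E (k + 1)) u - matVec (E k) u‖
        ≤ (1 / c₁ ^ 2) * (‖matVec (E k) u‖ + cL * η k * ‖u‖) := by
      set B := ‖matVec (E k) u‖ + cL * η k * ‖u‖ with hBdef
      rcases hupd k with ⟨hne, hA⟩ | ⟨hne, hA⟩
      · rw [hdiff k _ u hA, add_sub_cancel_left, norm_smul, Real.norm_eq_abs, abs_mul,
          one_div, abs_inv]
        have hd : 0 < |⟪τ k, s k⟫| := abs_pos.mpr hne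
        have hS := hσpos k
        have key : |⟪τ k, u⟫| * ‖ρ k‖ * c₁ ^ 2 ≤ B * |⟪τ k, s k⟫| := by
          nlinarith [mul_le_mul_of_nonneg_right habs
              (mul_nonneg (norm_nonneg (ρ k)) (sq_nonneg c₁)),
            mul_nonneg hB0 (sub_nonneg.mpr (hskip1 k)),
            mul_nonneg (mul_nonneg (mul_nonneg hS.le hB0) (norm_nonneg (ρ k)))
              (mul_nonneg hc₁0.le (sub_nonneg.mpr hc₁1.le))]
        calc |⟪τ k, s k⟫|⁻¹ * |⟪τ k, u⟫| * ‖ρ k‖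
            = (|⟪τ k, u⟫| * ‖ρ k‖) / |⟪τ k, s k⟫| := by ring
          _ ≤ 1 / c₁ ^ 2 * B := by
              rw [div_le_iff₀ hd,
                show 1 / c₁ ^ 2 * B * |⟪τ k, s k⟫| = (B * |⟪τ k, s k⟫|) / c₁ ^ 2 from by ring,
                le_div_iff₀ hc2]
              linarith [key]
      · rw [hdiff k _ u hA, add_sub_cancel_left, norm_smul, Real.norm_eq_abs, abs_mul,
          one_div, abs_inv]
        have hD : 0 < |⟪σ k, ρ k⟫| := abs_pos.mpr hne
        have hS := hσpos k
        have hCS : c₁ * ‖σ k‖ * ‖ρ k‖ ≤ ‖τ k‖ * ‖s k‖ :=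
          (hskip1 k).trans (abs_real_inner_le_norm _ _)
        have key : |⟪τ k, u⟫| * ‖ρ k‖ * c₁ ^ 2 ≤ B * |⟪σ k, ρ k⟫| := by
          nlinarith [mul_le_mul_of_nonneg_right habs
              (mul_nonneg (norm_nonneg (ρ k)) (sq_nonneg c₁)),
            mul_nonneg (mul_nonneg hB0 hc₁0.le) (sub_nonneg.mpr hCS),
            mul_nonneg hB0 (sub_nonneg.mpr (hskip2 k))]
        calc |⟪σ k, ρ k⟫|⁻¹ * |⟪τ k, u⟫| * ‖ρ k‖
            = (|⟪τ k, u⟫| * ‖ρ k‖) / |⟪σ k, ρ k⟫| := by ring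
          _ ≤ 1 / c₁ ^ 2 * B := by
              rw [div_le_iff₀ hD,
                show 1 / c₁ ^ 2 * B * |⟪σ k, ρ k⟫| = (B * |⟪σ k, ρ k⟫|) / c₁ ^ 2 from by ring,
                le_div_iff₀ hc2]
              linarith [key]
    have e : matVec (E k) u + (matVec (E (k + 1)) u - matVec (E k) u)
        = matVec (E (k + 1)) u := by abel
    have htri : ‖matVec (E (k + 1)) u‖
        ≤ ‖matVec (E k) u‖ + ‖matVec (E (k + 1)) u - matVec (E k) u‖ := by
      calc ‖matVec (E (k + 1)) u‖
          = ‖matVec (E k) u + (matVec (E (k + 1)) u - matVec (E k) u)‖ := by rw [e]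
        _ ≤ _ := norm_add_le _ _
    have expand : (1 / c₁ ^ 2) * (‖matVec (E k) u‖ + cL * η k * ‖u‖)
        = (1 / c₁ ^ 2) * ‖matVec (E k) u‖ + (1 / c₁ ^ 2) * cL * η k * ‖u‖ := by ring
    linarith [hP, htri, expand.le, expand.ge]
  -- per-step secant reduction
  have hsec : ∀ k, ‖matVec (E (k + 1)) (s k)‖ ≤ (3 * cL / c₁ ^ 2) * η k * ‖s k‖ := by
    intro k
    have hc2 : (0:ℝ) < c₁ ^ 2 := by positivity
    have hc21 : c₁ ^ 2 ≤ 1 := by nlinarith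
    rcases hupd k with ⟨hne, hA⟩ | ⟨hne, hA⟩
    · rw [hdiff k _ _ hA, one_div, inv_mul_cancel₀ hne, one_smul, hρE k]
      have e : matVec (E k) (s k) + (dv k - matVec (E k) (s k)) = dv k := by abel
      rw [e]
      calc ‖dv k‖ ≤ cL * η k * ‖s k‖ := hdv k
        _ ≤ (3 * cL / c₁ ^ 2) * η k * ‖s k‖ := by
            have h1 : cL ≤ 3 * cL / c₁ ^ 2 := by
              rw [le_div_iff₀ hc2]; nlinarith
            exact mul_le_mul_of_nonneg_right
              (mul_le_mul_of_nonneg_right h1 (hη0 k)) (norm_nonneg _)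
    · rw [hdiff k _ _ hA]
      have hEs : matVec (E k) (s k) = dv k - ρ k := by rw [hρE k]; abel
      rw [hEs]
      have e : dv k - ρ k + (1 / ⟪σ k, ρ k⟫ * ⟪τ k, s k⟫) • ρ k
          = dv k + ((1 / ⟪σ k, ρ k⟫ * ⟪τ k, s k⟫ - 1) • ρ k) := by
        rw [sub_smul, one_smul]; abel
      rw [e]
      have hD : 0 < |⟪σ k, ρ k⟫| := abs_pos.mpr hne
      have hS := hσpos k
      have hCS : c₁ * ‖σ k‖ * ‖ρ k‖ ≤ ‖τ k‖ * ‖s k‖ :=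
        (hskip1 k).trans (abs_real_inner_le_norm _ _)
      have hnum : |⟪τ k, s k⟫ - ⟪σ k, ρ k⟫| ≤ 2 * cL * η k * ‖σ k‖ * ‖s k‖ := by
        have h1 : ⟪τ k, s k⟫ = ⟪ev k, s k⟫ - ⟪σ k, matVec (E k) (s k)⟫ := hτinner k (s k)
        have h2 : ⟪σ k, ρ k⟫ = ⟪σ k, dv k⟫ - ⟪σ k, matVec (E k) (s k)⟫ := by
          rw [hρE k, inner_sub_right]
        rw [h1, h2, show ⟪ev k, s k⟫ - ⟪σ k, matVec (E k) (s k)⟫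
            - (⟪σ k, dv k⟫ - ⟪σ k, matVec (E k) (s k)⟫)
            = ⟪ev k, s k⟫ - ⟪σ k, dv k⟫ from by ring]
        calc |⟪ev k, s k⟫ - ⟪σ k, dv k⟫| ≤ |⟪ev k, s k⟫| + |⟪σ k, dv k⟫| := abs_sub _ _
          _ ≤ ‖ev k‖ * ‖s k‖ + ‖σ k‖ * ‖dv k‖ :=
              add_le_add (abs_real_inner_le_norm _ _) (abs_real_inner_le_norm _ _)
          _ ≤ (cL * η k * ‖σ k‖) * ‖s k‖ + ‖σ k‖ * (cL * η k * ‖s k‖) :=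
              add_le_add (mul_le_mul_of_nonneg_right (hev k) (norm_nonneg _))
                (mul_le_mul_of_nonneg_left (hdv k) (norm_nonneg _))
          _ = 2 * cL * η k * ‖σ k‖ * ‖s k‖ := by ring
      have key : |⟪τ k, s k⟫ - ⟪σ k, ρ k⟫| * ‖ρ k‖ * c₁ ^ 2
          ≤ (2 * cL * η k * ‖s k‖) * |⟪σ k, ρ k⟫| := by
        nlinarith [mul_le_mul_of_nonneg_right hnum
            (mul_nonneg (norm_nonneg (ρ k)) (sq_nonneg c₁)),
          mul_nonneg (mul_nonneg (mul_nonneg (mul_nonneg (by linarith [hcL0] : (0:ℝ) ≤ 2 * cL)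
            (hη0 k)) (norm_nonneg (s k))) hc₁0.le) (sub_nonneg.mpr hCS),
          mul_nonneg (mul_nonneg (mul_nonneg (by linarith [hcL0] : (0:ℝ) ≤ 2 * cL)
            (hη0 k)) (norm_nonneg (s k))) (sub_nonneg.mpr (hskip2 k))]
      have hfrac : |1 / ⟪σ k, ρ k⟫ * ⟪τ k, s k⟫ - 1| * ‖ρ k‖
          ≤ (2 * cL / c₁ ^ 2) * η k * ‖s k‖ := by
        have hβ : 1 / ⟪σ k, ρ k⟫ * ⟪τ k, s k⟫ - 1
            = (⟪τ k, s k⟫ - ⟪σ k, ρ k⟫) / ⟪σ k, ρ k⟫ := by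
          rw [sub_div, div_self hne, one_div, inv_mul_eq_div]
        rw [hβ, abs_div, div_mul_eq_mul_div, div_le_iff₀ hD,
          show (2 * cL / c₁ ^ 2) * η k * ‖s k‖ * |⟪σ k, ρ k⟫|
            = ((2 * cL * η k * ‖s k‖) * |⟪σ k, ρ k⟫|) / c₁ ^ 2 from by ring,
          le_div_iff₀ hc2]
        linarith [key]
      calc ‖dv k + (1 / ⟪σ k, ρ k⟫ * ⟪τ k, s k⟫ - 1) • ρ k‖
          ≤ ‖dv k‖ + ‖(1 / ⟪σ k, ρ k⟫ * ⟪τ k, s k⟫ - 1) • ρ k‖ := norm_add_le _ _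
        _ ≤ cL * η k * ‖s k‖ + |1 / ⟪σ k, ρ k⟫ * ⟪τ k, s k⟫ - 1| * ‖ρ k‖ := by
            rw [norm_smul, Real.norm_eq_abs]; exact add_le_add (hdv k) le_rfl
        _ ≤ cL * η k * ‖s k‖ + (2 * cL / c₁ ^ 2) * η k * ‖s k‖ := add_le_add le_rfl hfrac
        _ ≤ (3 * cL / c₁ ^ 2) * η k * ‖s k‖ := by
            have h1 : cL + 2 * cL / c₁ ^ 2 ≤ 3 * cL / c₁ ^ 2 := by
              rw [le_div_iff₀ hc2]
              have h2 : 2 * cL / c₁ ^ 2 * c₁ ^ 2 = 2 * cL := div_mul_cancel₀ _ hc2.ne'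
              nlinarith [h2, hcL0, hc21, hc2]
            nlinarith [mul_nonneg (hη0 k) (norm_nonneg (s k)), h1]
    
  -- constants
  set θ : ℝ := 1 + 1 / c₁ ^ 2 with hθdef
  have hθ1 : (1:ℝ) ≤ θ := by
    have h : 0 < 1 / c₁ ^ 2 := by positivity
    rw [hθdef]; linarith
  set Cb : ℝ := 3 * cL / c₁ ^ 2 with hCbdef
  set Cc : ℝ := (1 / c₁ ^ 2) * cL with hCcdef
  have hCb0 : 0 ≤ Cb := by positivity
  have hCc0 : 0 ≤ Cc := by positivity
  set C₆ : ℝ := θ ^ l * (Cb + l * Cc) with hC6def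
  have hC60 : 0 ≤ C₆ := by positivity
  set C₇ : ℝ := q * C₆ / c₄ with hC7def
  have hC70 : 0 ≤ C₇ := by positivity
  -- window bound
  have hwindow : ∀ k, k₀ ≤ k →
      ‖(A (k + l + 1) - J wstar) * N‖ ≤ C₇ * ∑ i ∈ Finset.range (l + 2), ε (k + i) := by
    intro k hk
    obtain ⟨ks, hmono, hrange, v, hv0, hsv, hVlow⟩ := hULI k hk
    set P : ℝ := ∑ i ∈ Finset.range (l + 2), ε (k + i) with hPdef
    have hP0 : 0 ≤ P := Finset.sum_nonneg fun i _ => hε0 _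
    have hεP : ∀ i, k ≤ i → i ≤ k + l + 1 → ε i ≤ P := by
      intro i h1 h2
      have hi : i - k < l + 2 := by omega
      have h3 : ε (k + (i - k)) ≤ P :=
        Finset.single_le_sum (f := fun j => ε (k + j)) (fun j _ => hε0 _)
          (Finset.mem_range.mpr hi)
      rwa [show k + (i - k) = i from by omega] at h3
    have hηP : ∀ i, k ≤ i → i ≤ k + l → η i ≤ P := by
      intro i h1 h2
      rw [hηdef]
      exact max_le (hεP i h1 (by omega)) (hεP (i + 1) (by omega) (by omega))
    have hθ0 : (0:ℝ) ≤ θ := by linarith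
    -- propagation of the directional error bound through the window
    have hprop : ∀ (u : EuclideanSpace ℝ (Fin n)) (j : ℕ) (d : ℕ), k ≤ j → j ≤ k + l →
        j + 1 + d ≤ k + l + 1 →
        ‖matVec (E (j + 1)) u‖ ≤ Cb * P * ‖u‖ →
        ‖matVec (E (j + 1 + d)) u‖ ≤ θ ^ d * (Cb + d * Cc) * P * ‖u‖ := by
      intro u j d
      induction d with
      | zero => intro h1 h2 h3 h4; simpa using h4
      | succ d ih =>
        intro h1 h2 h3 h4
        have hdbound := ih h1 h2 (by omega) h4
        have hstep' := hstep (j + 1 + d) u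
        have hηb : η (j + 1 + d) ≤ P := hηP _ (by omega) (by omega)
        have hθd : (1:ℝ) ≤ θ ^ (d + 1) := one_le_pow₀ hθ1
        have hT : Cc * η (j + 1 + d) * ‖u‖ ≤ Cc * P * ‖u‖ :=
          mul_le_mul_of_nonneg_right (mul_le_mul_of_nonneg_left hηb hCc0) (norm_nonneg u)
        have e1 : j + 1 + (d + 1) = (j + 1 + d) + 1 := by omega
        rw [e1]
        have hcomb : ‖matVec (E ((j + 1 + d) + 1)) u‖
            ≤ θ * (θ ^ d * (Cb + d * Cc) * P * ‖u‖) + Cc * P * ‖u‖ := by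
          calc ‖matVec (E ((j + 1 + d) + 1)) u‖
              ≤ θ * ‖matVec (E (j + 1 + d)) u‖ + Cc * η (j + 1 + d) * ‖u‖ := hstep'
            _ ≤ θ * (θ ^ d * (Cb + d * Cc) * P * ‖u‖) + Cc * P * ‖u‖ :=
                add_le_add (mul_le_mul_of_nonneg_left hdbound hθ0) hT
        refine hcomb.trans ?_
        have hpow : θ ^ (d + 1) = θ * θ ^ d := by rw [pow_succ]; ring
        have hCcP : 0 ≤ Cc * P * ‖u‖ :=
          mul_nonneg (mul_nonneg hCc0 hP0) (norm_nonneg u)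
        push_cast
        rw [hpow] at hθd ⊢
        nlinarith [mul_nonneg (sub_nonneg.mpr hθd) hCcP]
    -- the error in the q chosen step directions at the end of the window
    have hkey : ∀ j : Fin q, ‖matVec (E (k + l + 1)) (s (ks j))‖ ≤ C₆ * P * ‖s (ks j)‖ := by
      intro j
      obtain ⟨h1, h2⟩ := hrange j
      have hbase : ‖matVec (E (ks j + 1)) (s (ks j))‖ ≤ Cb * P * ‖s (ks j)‖ := by
        calc ‖matVec (E (ks j + 1)) (s (ks j))‖ ≤ Cb * η (ks j) * ‖s (ks j)‖ := hsec (ks j)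
          _ ≤ Cb * P * ‖s (ks j)‖ :=
              mul_le_mul_of_nonneg_right
                (mul_le_mul_of_nonneg_left (hηP _ h1 h2) hCb0) (norm_nonneg _)
      have hd := hprop (s (ks j)) (ks j) (k + l - ks j) h1 h2 (by omega) hbase
      rw [show ks j + 1 + (k + l - ks j) = k + l + 1 from by omega] at hd
      refine hd.trans ?_
      have hdl : k + l - ks j ≤ l := by omega
      have hmono1 : θ ^ (k + l - ks j) ≤ θ ^ l := pow_le_pow_right₀ hθ1 hdl
      have hmono2 : ((k + l - ks j : ℕ) : ℝ) ≤ (l : ℝ) := by exact_mod_cast hdl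
      have hC : θ ^ (k + l - ks j) * (Cb + (k + l - ks j : ℕ) * Cc) ≤ C₆ := by
        rw [hC6def]
        have h3 : Cb + ((k + l - ks j : ℕ) : ℝ) * Cc ≤ Cb + (l : ℝ) * Cc := by
          nlinarith [hCc0, hmono2]
        have h4 : 0 ≤ Cb + ((k + l - ks j : ℕ) : ℝ) * Cc :=
          add_nonneg hCb0 (mul_nonneg (Nat.cast_nonneg _) hCc0)
        exact mul_le_mul hmono1 h3 h4 (by positivity)
      exact mul_le_mul_of_nonneg_right (mul_le_mul_of_nonneg_right hC hP0) (norm_nonneg _)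
    -- the normalized step-direction matrix is surjective
    set V : Matrix (Fin q) (Fin q) ℝ := Matrix.of (fun i j => v j i / ‖v j‖) with hVdef
    have hVsurj : ∀ x : EuclideanSpace ℝ (Fin q), ∃ z, matVec V z = x := by
      have hinj : Function.Injective (Matrix.toEuclideanLin V) := by
        intro a b hab
        have h0 : matVec V (a - b) = 0 := by
          show Matrix.toEuclideanLin V (a - b) = 0
          rw [map_sub, hab, sub_self]
        have h5 := hVlow (a - b)
        rw [h0, norm_zero] at h5
        have h6 : ‖a - b‖ ≤ 0 := by nlinarith [norm_nonneg (a - b)]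
        have h7 : a - b = 0 := norm_le_zero_iff.mp h6
        exact sub_eq_zero.mp h7
      have hsurj := (LinearMap.injective_iff_surjective
        (f := Matrix.toEuclideanLin V)).mp hinj
      exact fun x => hsurj x
    -- bound on the whole range of N
    have hEN : ∀ x : EuclideanSpace ℝ (Fin q),
        ‖matVec (E (k + l + 1)) (matVec N x)‖ ≤ C₇ * P * ‖x‖ := by
      intro x
      obtain ⟨z, hz⟩ := hVsurj x
      have hzx : c₄ * ‖z‖ ≤ ‖x‖ := by
        have h5 := hVlow z
        rwa [hz] at h5
      have hz2 : ‖z‖ ≤ ‖x‖ / c₄ := by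
        rw [le_div_iff₀ hc₄]
        linarith [hzx]
      have hxe : x = ∑ i, (z i / ‖v i‖) • v i := by
        rw [← hz]
        ext r
        rw [euc_sum_apply, matVec_apply]
        congr 1
        ext i
        rw [hVdef]
        simp only [Matrix.of_apply]
        ring
      have hdecomp : matVec (E (k + l + 1)) (matVec N x)
          = ∑ i, (z i / ‖v i‖) • matVec (E (k + l + 1)) (s (ks i)) := by
        rw [hxe, matVec_sum, matVec_sum]
        congr 1
        ext i
        rw [matVec_smul_right, matVec_smul_right, hsv i]
      rw [hdecomp]
      calc ‖∑ i, (z i / ‖v i‖) • matVec (E (k + l + 1)) (s (ks i))‖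
          ≤ ∑ i, ‖(z i / ‖v i‖) • matVec (E (k + l + 1)) (s (ks i))‖ := norm_sum_le _ _
        _ ≤ ∑ _i : Fin q, ‖z‖ * (C₆ * P) := by
            refine Finset.sum_le_sum fun i _ => ?_
            have hvi : 0 < ‖v i‖ := norm_pos_iff.mpr (hv0 i)
            have hsnorm : ‖s (ks i)‖ = ‖v i‖ := by
              rw [hsv i, norm_matVec_orthonormal hN]
            have hEk' : ‖matVec (E (k + l + 1)) (s (ks i))‖ ≤ C₆ * P * ‖v i‖ := by
              rw [← hsnorm]; exact hkey i
            rw [norm_smul, Real.norm_eq_abs, abs_div, abs_norm]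
            calc |z i| / ‖v i‖ * ‖matVec (E (k + l + 1)) (s (ks i))‖
                ≤ |z i| / ‖v i‖ * (C₆ * P * ‖v i‖) :=
                  mul_le_mul_of_nonneg_left hEk' (by positivity)
              _ = |z i| * (C₆ * P) := by
                  field_simp
              _ ≤ ‖z‖ * (C₆ * P) := by
                  refine mul_le_mul_of_nonneg_right ?_ (mul_nonneg hC60 hP0)
                  rw [← Real.norm_eq_abs]
                  exact coord_le_norm z i
        _ = (q : ℝ) * ‖z‖ * (C₆ * P) := by
            rw [Finset.sum_const, Finset.card_univ, Fintype.card_fin, nsmul_eq_mul]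
            ring
        _ ≤ (q : ℝ) * (‖x‖ / c₄) * (C₆ * P) :=
            mul_le_mul_of_nonneg_right
              (mul_le_mul_of_nonneg_left hz2 (Nat.cast_nonneg q))
              (mul_nonneg hC60 hP0)
        _ = C₇ * P * ‖x‖ := by
            rw [hC7def]
            ring
    have hEeq : A (k + l + 1) - J wstar = E (k + l + 1) := by rw [hEdef]
    rw [hEeq]
    refine opNorm_le_of_forall _ (by positivity) ?_
    intro x
    rw [matVec_mul]
    exact hEN x
  -- assemble the limit
  have hε0' : Tendsto ε atTop (nhds 0) := by
    have h := tendsto_iff_norm_sub_tendsto_zero.mp hconv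
    simpa [hεdef] using h
  have hsum : Tendsto (fun K => C₇ * ∑ i ∈ Finset.range (l + 2), ε (K - (l + 1) + i))
      atTop (nhds 0) := by
    have h1 : Tendsto (fun K => ∑ i ∈ Finset.range (l + 2), ε (K - (l + 1) + i))
        atTop (nhds 0) := by
      have h2 : ∀ i ∈ Finset.range (l + 2),
          Tendsto (fun K => ε (K - (l + 1) + i)) atTop (nhds (0:ℝ)) := by
        intro i _
        have h3 : Tendsto (fun K : ℕ => K - (l + 1) + i) atTop atTop :=
          (tendsto_add_atTop_nat i).comp (tendsto_sub_atTop_nat (l + 1))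
        have h4 := hε0'.comp h3
        exact h4
      have h5 := tendsto_finset_sum (Finset.range (l + 2)) h2
      simpa using h5
    simpa using h1.const_mul C₇
  refine squeeze_zero' (Eventually.of_forall fun k => norm_nonneg _) ?_ hsum
  filter_upwards [eventually_ge_atTop (k₀ + l + 1)] with K hK
  have hk : k₀ ≤ K - (l + 1) := by omega
  have h6 := hwindow (K - (l + 1)) hk
  rwa [show K - (l + 1) + l + 1 = K from by omega] at h6
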